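/- Each ∼-class contains at most one quasi-ribbon word: if u, v ∈ 𝒜_n^* are quasi-ribbon words with u ∼ v, then u = v. -/

import Mathlib

/-!
Common setup: words over the alphabet `𝒜_n = {1,…,n}` (modelled as `List ℕ`),
quasi-Kashiwara operators, the quasi-crystal graph, Kashiwara operators,
quasi-ribbon words, and the hypoplactic congruence.
-/

namespace HypoCrystal

noncomputable section
open scoped Classical

/-- `u` is a word over the alphabet `𝒜_n = {1,…,n}`. -/
def IsWord (n : ℕ) (u : List ℕ) : Prop := ∀ a ∈ u, 1 ≤ a ∧ a ≤ n

/-- `u` has an `i`-inversion: some letter `i+1` occurs strictly to the left of some letter `i`. -/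
def HasInv (i : ℕ) (u : List ℕ) : Prop :=
  ∃ v w x : List ℕ, u = v ++ (i + 1) :: w ++ i :: x

/-- Replace the first (leftmost) occurrence of `a` by `b`, if any; otherwise `none`. -/
def replaceFirst (a b : ℕ) : List ℕ → Option (List ℕ)
  | [] => none
  | x :: xs => if x = a then some (b :: xs) else (replaceFirst a b xs).map (x :: ·)

/-- The quasi-Kashiwara raising operator `e_i` (partial map, `none` = undefined):
if `u` has an `i`-inversion it is undefined; otherwise it replaces the leftmost
letter `i+1` by `i` (undefined if there is no letter `i+1`). -/
def qe (i : ℕ) (u : List ℕ) : Option (List ℕ) :=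
  if HasInv i u then none else replaceFirst (i + 1) i u

/-- The quasi-Kashiwara lowering operator `f_i` (partial map, `none` = undefined):
if `u` has an `i`-inversion it is undefined; otherwise it replaces the rightmost
letter `i` by `i+1` (undefined if there is no letter `i`). -/
def qf (i : ℕ) (u : List ℕ) : Option (List ℕ) :=
  if HasInv i u then none else (replaceFirst i (i + 1) u.reverse).map List.reverse

/-- Weight of a word: `wt u a` is the number of occurrences of the letter `a` in `u`. -/
def wt (u : List ℕ) : ℕ → ℕ := fun a => u.count a

/-- There is an edge labelled `i` from `u` to `v` in the quasi-crystal graph `Γ(hypo_n)`. -/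
def Edge (n i : ℕ) (u v : List ℕ) : Prop := 1 ≤ i ∧ i < n ∧ qf i u = some v

/-- `u` and `v` are adjacent (in the underlying undirected graph) in `Γ(hypo_n)`. -/
def Adj (n : ℕ) (u v : List ℕ) : Prop := ∃ i, Edge n i u v ∨ Edge n i v u

/-- `v` lies in the connected component `Γ(hypo_n, u)` of `u` in the quasi-crystal graph. -/
def SameComp (n : ℕ) : List ℕ → List ℕ → Prop := Relation.ReflTransGen (Adj n)

/-- `u` is a highest-weight word: no raising operator `e_i` is defined on `u`. -/
def HighestWeight (n : ℕ) (u : List ℕ) : Prop := ∀ i, 1 ≤ i → i < n → qe i u = none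

/-- `θ` is a quasi-crystal isomorphism from the component of `u` onto the component of `v`:
a weight-preserving bijection preserving labelled edges in both directions. -/
def IsQCIso (n : ℕ) (u v : List ℕ) (θ : List ℕ → List ℕ) : Prop :=
  Set.BijOn θ {x | SameComp n u x} {y | SameComp n v y} ∧
  (∀ x, SameComp n u x → wt (θ x) = wt x) ∧
  (∀ x y, SameComp n u x → SameComp n u y → ∀ i, (Edge n i x y ↔ Edge n i (θ x) (θ y)))

/-- `u ∼ v`: there is a quasi-crystal isomorphism between the components of `u` and `v`
taking `u` to `v`. -/
def Sim (n : ℕ) (u v : List ℕ) : Prop :=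
  ∃ θ : List ℕ → List ℕ, IsQCIso n u v θ ∧ θ u = v

/-- The standardization of `u`: position `k` receives the rank (starting at 1) of the
pair `(u_k, k)` among all pairs `(u_l, l)` ordered lexicographically. -/
def std (u : List ℕ) : List ℕ :=
  (List.range u.length).map fun k =>
    1 + ((List.range u.length).filter fun l =>
      u.getD l 0 < u.getD k 0 ∨ (u.getD l 0 = u.getD k 0 ∧ l < k)).length

/-- The maximal strictly decreasing factors of a word (the columns of its
quasi-ribbon tabloid, each read bottom-to-top). -/
def decFactors : List ℕ → List (List ℕ)
  | [] => []
  | a :: rest =>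
    match decFactors rest with
    | (b :: f) :: fs => if b < a then (a :: b :: f) :: fs else [a] :: (b :: f) :: fs
    | l => [a] :: l

/-- `w` is a quasi-ribbon word: its quasi-ribbon tabloid is a quasi-ribbon tableau,
i.e. the bottom entry of each column is ≤ the top entry of the next column. -/
def IsQRWord (w : List ℕ) : Prop :=
  (decFactors w).Chain' fun c d => c.headD 0 ≤ d.getLastD 0

/-- Row lengths (top to bottom) of the ribbon diagram whose column heights
(left to right) are given. -/
def rowLengths : List ℕ → List ℕ
  | [] => []
  | [d] => List.replicate d 1
  | d :: e :: rest =>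
    List.replicate (d - 1) 1 ++
      (match rowLengths (e :: rest) with
       | [] => [1]
       | r :: rs => (r + 1) :: rs)

/-- The shape (as a composition, listed top row first) of the quasi-ribbon tabloid of `w`. -/
def shape (w : List ℕ) : List ℕ := rowLengths ((decFactors w).map List.length)

/-- Columns of the quasi-ribbon tableau of shape `α` whose `j`-th row consists
entirely of symbols `j`, where rows are labelled starting from `j₀`. -/
def hwCols : List ℕ → ℕ → List (List ℕ)
  | [], _ => []
  | [a], j => List.replicate a [j]
  | a :: b :: rest, j =>
    List.replicate (a - 1) [j] ++
      (match hwCols (b :: rest) (j + 1) with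
       | [] => [[j]]
       | c :: cs => (c ++ [j]) :: cs)

/-- The column reading of the quasi-ribbon tableau of shape `α` whose `j`-th row
consists entirely of symbols `j`. -/
def hwQR (α : List ℕ) : List ℕ := (hwCols α 1).flatten

/-- The defining relations `R_hypo` of the hypoplactic monoid of rank `n`. -/
inductive HypoRel (n : ℕ) : List ℕ → List ℕ → Prop
  | knuth1 {a b c : ℕ} : 1 ≤ a → a ≤ b → b < c → c ≤ n → HypoRel n [a, c, b] [c, a, b]
  | knuth2 {a b c : ℕ} : 1 ≤ a → a < b → b ≤ c → c ≤ n → HypoRel n [b, a, c] [b, c, a]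
  | quasi1 {a b c d : ℕ} : 1 ≤ a → a ≤ b → b < c → c ≤ d → d ≤ n →
      HypoRel n [c, a, d, b] [a, c, b, d]
  | quasi2 {a b c d : ℕ} : 1 ≤ a → a < b → b ≤ c → c < d → d ≤ n →
      HypoRel n [b, d, a, c] [d, b, c, a]

/-- The hypoplactic congruence `≡_hypo`: the congruence on the free monoid generated
by the relations `R_hypo`. -/
inductive HypoCong (n : ℕ) : List ℕ → List ℕ → Prop
  | of {u v} : HypoRel n u v → HypoCong n u v
  | refl (u) : HypoCong n u u
  | symm {u v} : HypoCong n u v → HypoCong n v u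
  | trans {u v w} : HypoCong n u v → HypoCong n v w → HypoCong n u w
  | append {u v u' v'} : HypoCong n u v → HypoCong n u' v' →
      HypoCong n (u ++ u') (v ++ v')

/-- The signature word of `u` for index `i`: each letter `i` becomes `(position, true)`
(that is, `+`) and each letter `i+1` becomes `(position, false)` (that is, `−`). -/
def signWord (i : ℕ) (u : List ℕ) : List (ℕ × Bool) :=
  ((List.range u.length).zip u).filterMap fun pa =>
    if pa.2 = i then some (pa.1, true)
    else if pa.2 = i + 1 then some (pa.1, false) else none

/-- Iteratively delete factors `−+` from a signature word, producing the reduced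
word `+^p −^q`. -/
def reduce : List (ℕ × Bool) → List (ℕ × Bool)
  | [] => []
  | x :: rest =>
    match reduce rest with
    | y :: rest' => if x.2 = false ∧ y.2 = true then rest' else x :: y :: rest'
    | [] => [x]

/-- The Kashiwara raising operator `ẽ_i`, computed by the signature rule: change to `i`
the letter `i+1` corresponding to the leftmost `−` of the reduced signature word. -/
def KE (i : ℕ) (u : List ℕ) : Option (List ℕ) :=
  (((reduce (signWord i u)).filter fun x => !x.2).head?).map fun x => u.set x.1 i

/-- The Kashiwara lowering operator `f̃_i`, computed by the signature rule: change to `i+1`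
the letter `i` corresponding to the rightmost `+` of the reduced signature word. -/
def KF (i : ℕ) (u : List ℕ) : Option (List ℕ) :=
  (((reduce (signWord i u)).filter fun x => x.2).getLast?).map fun x => u.set x.1 (i + 1)

/-- The Schützenberger involution on `𝒜_n^*`: reverse the word and replace each
letter `a` by `n − a + 1`. -/
def sharp (n : ℕ) (u : List ℕ) : List ℕ := u.reverse.map fun a => n + 1 - a

/-- The largest letter occurring in `u` (0 for the empty word). -/
def maxLetter (u : List ℕ) : ℕ := u.foldr max 0

/-- `β` is coarser than `α` (`β ⪯ α`): they have the same weight and every proper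
partial sum of `β` is a proper partial sum of `α`. -/
def Coarser (β α : List ℕ) : Prop :=
  β.sum = α.sum ∧ ∀ p < β.length, ∃ m < α.length, (β.take p).sum = (α.take m).sum

end
end HypoCrystal

namespace HypoCrystal

/-! ### Auxiliary development -/

section Aux

/-- Lengths of the maximal strictly decreasing factors. -/
def heights (u : List ℕ) : List ℕ := (decFactors u).map List.length

lemma decFactors_flatten (u : List ℕ) : (decFactors u).flatten = u := by
  induction u with
  | nil => rfl
  | cons a rest ih =>
    rw [decFactors]
    rcases h : decFactors rest with _ | ⟨c, fs⟩
    · simp_all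
    · rw [h] at ih
      rcases c with _ | ⟨b, f⟩
      · simpa using ih
      · by_cases hba : b < a
        · simp only [if_pos hba, List.flatten_cons] at ih ⊢
          simp [ih]
        · simp only [if_neg hba, List.flatten_cons] at ih ⊢
          simp [ih]

lemma decFactors_ne_nil {u : List ℕ} : ∀ c ∈ decFactors u, c ≠ [] := by
  induction u with
  | nil => simp [decFactors]
  | cons a rest ih =>
    rw [decFactors]
    rcases h : decFactors rest with _ | ⟨c, fs⟩
    · simp
    · rcases c with _ | ⟨b, f⟩
      · intro c hc
        simp only [List.mem_cons] at hc
        rcases hc with rfl | rfl | hc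
        · simp
        · exact ih _ (h ▸ List.mem_cons_self)
        · exact ih _ (h ▸ (List.mem_cons_of_mem _ hc))
      · by_cases hba : b < a
        · simp only [if_pos hba]
          intro c hc
          simp only [List.mem_cons] at hc
          rcases hc with rfl | hc
          · simp
          · exact ih _ (h ▸ (List.mem_cons_of_mem _ hc))
        · simp only [if_neg hba]
          intro c hc
          simp only [List.mem_cons] at hc
          rcases hc with rfl | rfl | hc
          · simp
          · exact ih _ (h ▸ List.mem_cons_self)
          · exact ih _ (h ▸ (List.mem_cons_of_mem _ hc))

lemma decFactors_head {u : List ℕ} {c : ℕ} {f : List ℕ} {fs : List (List ℕ)}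
    (h : decFactors u = (c :: f) :: fs) : u.head? = some c := by
  induction u generalizing c f fs with
  | nil => simp [decFactors] at h
  | cons a rest ih =>
    rw [decFactors] at h
    rcases h2 : decFactors rest with _ | ⟨c', fs'⟩
    · rw [h2] at h
      simp at h
      simp [h.1]
    · rw [h2] at h
      rcases c' with _ | ⟨b, f'⟩
      · simp at h
        simp [h.1]
      · by_cases hba : b < a
        · simp only [if_pos hba] at h
          obtain ⟨h1, -⟩ := List.cons.injEq .. ▸ h
          simp at h1
          simp [h1.1]
        · simp only [if_neg hba] at h
          obtain ⟨h1, -⟩ := List.cons.injEq .. ▸ h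
          simp at h1
          simp [h1.1]

lemma decFactors_sorted {u : List ℕ} : ∀ c ∈ decFactors u, c.Chain' (fun p q => q < p) := by
  induction u with
  | nil => simp [decFactors]
  | cons a rest ih =>
    rw [decFactors]
    rcases h : decFactors rest with _ | ⟨c, fs⟩
    · simp [List.Chain']
    · rcases c with _ | ⟨b, f⟩
      · intro c hc
        simp only [List.mem_cons] at hc
        rcases hc with rfl | rfl | hc
        · exact List.isChain_singleton _
        · exact ih _ (h ▸ List.mem_cons_self)
        · exact ih _ (h ▸ (List.mem_cons_of_mem _ hc))
      · by_cases hba : b < a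
        · simp only [if_pos hba]
          intro c hc
          simp only [List.mem_cons] at hc
          rcases hc with rfl | hc
          · exact List.IsChain.cons_cons hba (ih _ (h ▸ List.mem_cons_self))
          · exact ih _ (h ▸ (List.mem_cons_of_mem _ hc))
        · simp only [if_neg hba]
          intro c hc
          simp only [List.mem_cons] at hc
          rcases hc with rfl | rfl | hc
          · exact List.isChain_singleton _
          · exact ih _ (h ▸ List.mem_cons_self)
          · exact ih _ (h ▸ (List.mem_cons_of_mem _ hc))


lemma replaceFirst_eq_some {a b : ℕ} {l m : List ℕ} :
    replaceFirst a b l = some m ↔ ∃ s t, l = s ++ a :: t ∧ a ∉ s ∧ m = s ++ b :: t := by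
  induction l generalizing m with
  | nil => simp [replaceFirst]
  | cons x xs ih =>
    rw [replaceFirst]
    by_cases hx : x = a
    · subst hx
      rw [if_pos rfl]
      constructor
      · rintro h
        injection h with h
        exact ⟨[], xs, by simp, by simp, h.symm⟩
      · rintro ⟨s, t, h1, h2, rfl⟩
        rcases s with _ | ⟨y, s'⟩
        · simp at h1
          simp [h1]
        · simp only [List.cons_append, List.cons.injEq] at h1
          simp only [List.mem_cons] at h2
          exact absurd h1.1 (fun hh => h2 (Or.inl hh))
          
    · rw [if_neg hx]
      constructor
      · intro h
        rcases hrf : replaceFirst a b xs with _ | m'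
        · rw [hrf] at h; simp at h
        · rw [hrf] at h
          simp only [Option.map_some] at h
          injection h with h
          obtain ⟨s, t, rfl, h2, rfl⟩ := ih.1 hrf
          refine ⟨x :: s, t, by simp, ?_, by simp [← h]⟩
          simp only [List.mem_cons, not_or]
          exact ⟨fun hh => hx hh.symm, h2⟩
      · rintro ⟨s, t, h1, h2, rfl⟩
        rcases s with _ | ⟨y, s'⟩
        · simp only [List.nil_append, List.cons.injEq] at h1
          exact absurd h1.1 hx
        · simp only [List.cons_append, List.cons.injEq] at h1
          obtain ⟨rfl, h1⟩ := h1
          simp only [List.mem_cons] at h2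
          have : replaceFirst a b xs = some (s' ++ b :: t) :=
            ih.2 ⟨s', t, h1, fun hh => h2 (Or.inr hh), rfl⟩
          rw [this]
          simp

lemma replaceFirst_eq_none {a b : ℕ} {l : List ℕ} :
    replaceFirst a b l = none ↔ a ∉ l := by
  induction l with
  | nil => simp [replaceFirst]
  | cons x xs ih =>
    rw [replaceFirst]
    by_cases hx : x = a
    · subst hx; simp
    · simp [hx, Ne.symm hx, ih]

lemma hasInv_iff_split {i : ℕ} {u : List ℕ} :
    HasInv i u ↔ ∃ s t, u = s ++ t ∧ (i + 1) ∈ s ∧ i ∈ t := by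
  constructor
  · rintro ⟨v, w, x, rfl⟩
    exact ⟨v ++ [i + 1], w ++ i :: x, by simp, by simp, by simp⟩
  · rintro ⟨s, t, rfl, hs, ht⟩
    obtain ⟨s1, s2, rfl⟩ := List.append_of_mem hs
    obtain ⟨t1, t2, rfl⟩ := List.append_of_mem ht
    exact ⟨s1, s2 ++ t1, t2, by simp⟩

lemma qe_eq_some {i : ℕ} {u y : List ℕ} :
    qe i u = some y ↔
      ¬ HasInv i u ∧ ∃ v w, u = v ++ (i + 1) :: w ∧ (i + 1) ∉ v ∧ y = v ++ i :: w := by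
  rw [qe]
  by_cases h : HasInv i u
  · simp [h]
  · simp [h, replaceFirst_eq_some]

lemma qe_eq_none {i : ℕ} {u : List ℕ} :
    qe i u = none ↔ HasInv i u ∨ (i + 1) ∉ u := by
  rw [qe]
  by_cases h : HasInv i u
  · simp [h]
  · simp [h, replaceFirst_eq_none]

lemma qf_eq_some {i : ℕ} {u y : List ℕ} :
    qf i u = some y ↔
      ¬ HasInv i u ∧ ∃ v w, u = v ++ i :: w ∧ i ∉ w ∧ y = v ++ (i + 1) :: w := by
  rw [qf]
  by_cases h : HasInv i u
  · simp [h]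
  · rw [if_neg h]
    simp only [h, not_false_iff, true_and]
    constructor
    · intro hmap
      rcases hrf : replaceFirst i (i + 1) u.reverse with _ | m
      · rw [hrf] at hmap; simp at hmap
      · rw [hrf] at hmap
        simp only [Option.map_some] at hmap
        injection hmap with hmap
        obtain ⟨s, t, hrev, hs, rfl⟩ := replaceFirst_eq_some.1 hrf
        refine ⟨t.reverse, s.reverse, ?_, by simpa using hs, by simp [← hmap]⟩
        have := congrArg List.reverse hrev
        simpa using this
    · rintro ⟨v, w, rfl, hw, rfl⟩
      have : replaceFirst i (i + 1) (v ++ i :: w).reverse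
          = some (w.reverse ++ (i + 1) :: v.reverse) := by
        apply replaceFirst_eq_some.2
        exact ⟨w.reverse, v.reverse, by simp, by simpa using hw, rfl⟩
      rw [this]
      simp

lemma qf_qe {i : ℕ} {x y : List ℕ} (h : qe i x = some y) : qf i y = some x := by
  obtain ⟨hni, v, w, rfl, hv, rfl⟩ := qe_eq_some.1 h
  have hiw : i ∉ w := by
    intro hiw
    obtain ⟨w1, w2, rfl⟩ := List.append_of_mem hiw
    exact hni ⟨v, w1, w2, by simp⟩
  have hny : ¬ HasInv i (v ++ i :: w) := by
    intro hinv
    obtain ⟨s, t, heq, hs, ht⟩ := hasInv_iff_split.1 hinv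
    rcases List.append_eq_append_iff.1 heq.symm with ⟨m, hm1, hm2⟩ | ⟨m, hm1, hm2⟩
    · have : (i + 1) ∈ v := by rw [hm1]; exact List.mem_append_left _ hs
      exact hv this
    · rcases m with _ | ⟨z, m'⟩
      · simp only [List.append_nil] at hm1
        exact hv (hm1 ▸ hs)
      · simp only [List.cons_append, List.cons.injEq] at hm2
        obtain ⟨rfl, rfl⟩ := hm2
        exact hni (hasInv_iff_split.2
          ⟨v ++ [i + 1], m' ++ t, by simp, by simp, List.mem_append_right _ ht⟩)
  apply qf_eq_some.2
  exact ⟨hny, v, w, rfl, hiw, rfl⟩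

lemma qe_qf {i : ℕ} {x y : List ℕ} (h : qf i y = some x) : qe i x = some y := by
  obtain ⟨hni, v, w, rfl, hw, rfl⟩ := qf_eq_some.1 h
  have hiv : (i + 1) ∉ v := by
    intro hiv
    obtain ⟨v1, v2, rfl⟩ := List.append_of_mem hiv
    exact hni ⟨v1, v2, w, by simp⟩
  have hnx : ¬ HasInv i (v ++ (i + 1) :: w) := by
    intro hinv
    obtain ⟨s, t, heq, hs, ht⟩ := hasInv_iff_split.1 hinv
    rcases List.append_eq_append_iff.1 heq.symm with ⟨m, hm1, hm2⟩ | ⟨m, hm1, hm2⟩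
    · subst hm1 hm2
      have him : i ∈ m := by
        rcases List.mem_append.1 ht with h' | h'
        · exact h'
        · simp only [List.mem_cons] at h'
          rcases h' with h' | h'
          · omega
          · exact absurd h' hw
      exact hni (hasInv_iff_split.2
        ⟨s, m ++ i :: w, by simp, hs, List.mem_append_left _ him⟩)
    · rcases m with _ | ⟨z, m'⟩
      · simp only [List.nil_append] at hm2
        rw [← hm2] at ht
        simp only [List.mem_cons] at ht
        rcases ht with ht | ht
        · omega
        · exact hw ht
      · simp only [List.cons_append, List.cons.injEq] at hm2
        obtain ⟨rfl, rfl⟩ := hm2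
        exact hw (List.mem_append_right _ ht)
  apply qe_eq_some.2
  exact ⟨hnx, v, w, rfl, hiv, rfl⟩


lemma decFactors_cons_glue {a c0 : ℕ} {f : List ℕ} {fs : List (List ℕ)} {rest : List ℕ}
    (h : decFactors rest = (c0 :: f) :: fs) (hc : c0 < a) :
    decFactors (a :: rest) = (a :: c0 :: f) :: fs := by
  rw [decFactors, h]
  simp [hc]

lemma decFactors_cons_new {a c0 : ℕ} {f : List ℕ} {fs : List (List ℕ)} {rest : List ℕ}
    (h : decFactors rest = (c0 :: f) :: fs) (hc : ¬ c0 < a) :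
    decFactors (a :: rest) = [a] :: (c0 :: f) :: fs := by
  rw [decFactors, h]
  simp [hc]

lemma decFactors_cons_nil {a : ℕ} {rest : List ℕ} (h : decFactors rest = []) :
    decFactors (a :: rest) = [[a]] := by
  rw [decFactors, h]

/-- Get a non-degenerate head factor of `decFactors rest` when it is nonempty. -/
lemma decFactors_shape {rest : List ℕ} :
    decFactors rest = [] ∨ ∃ c0 f fs, decFactors rest = (c0 :: f) :: fs := by
  rcases h : decFactors rest with _ | ⟨c, fs⟩
  · exact Or.inl rfl
  · rcases c with _ | ⟨c0, f⟩
    · exact absurd rfl (decFactors_ne_nil _ (h ▸ List.mem_cons_self))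
    · exact Or.inr ⟨c0, f, fs, rfl⟩

lemma decFactors_replace {a b : ℕ} (hab : a ≠ b) {w : List ℕ}
    (hw : ∀ h0 ∈ w.head?, (h0 < a ↔ h0 < b)) :
    ∀ v : List ℕ, (∀ lv ∈ v.getLast?, (a < lv ↔ b < lv)) →
    ∃ fs p q gs, decFactors (v ++ a :: w) = fs ++ (p ++ a :: q) :: gs ∧
                 decFactors (v ++ b :: w) = fs ++ (p ++ b :: q) :: gs := by
  intro v
  induction v with
  | nil =>
    intro _
    simp only [List.nil_append]
    rcases decFactors_shape (rest := w) with hdw | ⟨c0, f, fs, hdw⟩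
    · exact ⟨[], [], [], [], by rw [decFactors_cons_nil hdw]; rfl,
        by rw [decFactors_cons_nil hdw]; rfl⟩
    · have hc0 : (c0 < a ↔ c0 < b) := hw c0 (by rw [decFactors_head hdw]; rfl)
      by_cases hca : c0 < a
      · exact ⟨[], [], c0 :: f, fs, by rw [decFactors_cons_glue hdw hca]; rfl,
          by rw [decFactors_cons_glue hdw (hc0.1 hca)]; rfl⟩
      · exact ⟨[], [], [], (c0 :: f) :: fs, by rw [decFactors_cons_new hdw hca]; rfl,
          by rw [decFactors_cons_new hdw (fun hh => hca (hc0.2 hh))]; rfl⟩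
  | cons x v' ih =>
    intro hv
    have hv' : ∀ lv ∈ v'.getLast?, (a < lv ↔ b < lv) := by
      intro lv hlv
      apply hv
      rcases v' with _ | ⟨y, v''⟩
      · simp at hlv
      · rw [List.getLast?_cons_cons]
        exact hlv
    obtain ⟨fs, p, q, gs, hA, hB⟩ := ih hv'
    rcases fs with _ | ⟨f0, fs'⟩
    · rcases p with _ | ⟨p0, p'⟩
      · -- first factor is a :: q resp. b :: q
        rcases v' with _ | ⟨y, v''⟩
        · have hx : (a < x ↔ b < x) := hv x (by simp)
          simp only [List.nil_append] at hA hB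
          by_cases hax : a < x
          · exact ⟨[], [x], q, gs,
              by rw [List.cons_append, List.nil_append, decFactors_cons_glue hA hax]; rfl,
              by rw [List.cons_append, List.nil_append, decFactors_cons_glue hB (hx.1 hax)]; rfl⟩
          · exact ⟨[[x]], [], q, gs,
              by rw [List.cons_append, List.nil_append, decFactors_cons_new hA hax]; rfl,
              by rw [List.cons_append, List.nil_append,
                decFactors_cons_new hB (fun hh => hax (hx.2 hh))]; rfl⟩
        · exfalso
          have h1 : (y :: (v'' ++ a :: w)).head? = some a := by
            rw [← List.cons_append]
            exact decFactors_head (by simpa using hA)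
          have h2 : (y :: (v'' ++ b :: w)).head? = some b := by
            rw [← List.cons_append]
            exact decFactors_head (by simpa using hB)
          simp only [List.head?_cons, Option.some.injEq] at h1 h2
          exact hab (h1 ▸ h2 ▸ rfl)
      · -- first factor starts with p0 on both sides
        simp only [List.cons_append] at hA hB
        by_cases hpx : p0 < x
        · exact ⟨[], x :: p0 :: p', q, gs,
            by rw [List.cons_append, decFactors_cons_glue hA hpx]; rfl,
            by rw [List.cons_append, decFactors_cons_glue hB hpx]; rfl⟩
        · exact ⟨[[x]], p0 :: p', q, gs,
            by rw [List.cons_append, decFactors_cons_new hA hpx]; rfl,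
            by rw [List.cons_append, decFactors_cons_new hB hpx]; rfl⟩
    · -- head factor f0 common to both sides
      have hf0 : f0 ≠ [] := by
        apply decFactors_ne_nil (u := v' ++ a :: w)
        rw [hA]
        exact List.mem_cons_self
      rcases f0 with _ | ⟨c0, f0'⟩
      · exact absurd rfl hf0
      · simp only [List.cons_append] at hA hB
        by_cases hcx : c0 < x
        · exact ⟨(x :: c0 :: f0') :: fs', p, q, gs,
            by rw [List.cons_append, decFactors_cons_glue hA hcx]; rfl,
            by rw [List.cons_append, decFactors_cons_glue hB hcx]; rfl⟩
        · exact ⟨[x] :: (c0 :: f0') :: fs', p, q, gs,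
            by rw [List.cons_append, decFactors_cons_new hA hcx]; rfl,
            by rw [List.cons_append, decFactors_cons_new hB hcx]; rfl⟩

lemma marked_inj {a b : ℕ} (hab : a ≠ b) :
    ∀ {L v M w : List ℕ}, L ++ a :: M = v ++ a :: w → L ++ b :: M = v ++ b :: w →
      L = v ∧ M = w := by
  intro L
  induction L with
  | nil =>
    intro v M w h1 h2
    rcases v with _ | ⟨x, v'⟩
    · simp only [List.nil_append, List.cons.injEq] at h1
      exact ⟨rfl, h1.2⟩
    · simp only [List.nil_append, List.cons_append, List.cons.injEq] at h1 h2
      exact absurd (h1.1 ▸ h2.1 ▸ rfl) hab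
  | cons y L' ih =>
    intro v M w h1 h2
    rcases v with _ | ⟨x, v'⟩
    · simp only [List.cons_append, List.nil_append, List.cons.injEq] at h1 h2
      exact absurd (h1.1 ▸ h2.1 ▸ rfl) (Ne.symm hab)
    · simp only [List.cons_append, List.cons.injEq] at h1 h2
      obtain ⟨rfl, h1'⟩ := h1
      obtain ⟨-, h2'⟩ := h2
      obtain ⟨rfl, rfl⟩ := ih h1' h2'
      exact ⟨rfl, rfl⟩


lemma getLastD_cons' (a d : ℕ) (l : List ℕ) : (a :: l).getLastD d = l.getLastD a := by
  cases l <;> simp [List.getLastD]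

lemma getLastD_append_cons (p : List ℕ) (c : ℕ) (q : List ℕ) :
    (p ++ c :: q).getLastD 0 = (c :: q).getLastD 0 := by
  rw [List.getLastD_eq_getLast?, List.getLast?_append_cons, ← List.getLastD_eq_getLast?]

lemma getLastD_mem {l : List ℕ} (h : l ≠ []) : l.getLastD 0 ∈ l := by
  rw [List.getLastD_eq_getLast?, List.getLast?_eq_getLast h]
  exact List.getLast_mem h

lemma getLastD_irrel {l : List ℕ} (h : l ≠ []) (d : ℕ) : l.getLastD d = l.getLastD 0 := by
  rw [List.getLastD_eq_getLast?, List.getLastD_eq_getLast?, List.getLast?_eq_getLast h]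
  rfl

lemma headD_mem {l : List ℕ} (h : l ≠ []) : l.headD 0 ∈ l := by
  rcases l with _ | ⟨a, l'⟩
  · exact absurd rfl h
  · simp

/-- Common engine for `qf_step`/`qe_step`. -/
lemma replace_step {a b : ℕ} (hab : a ≠ b) {v w : List ℕ}
    (hQR : IsQRWord (v ++ a :: w))
    (hw : ∀ h0 ∈ w.head?, (h0 < a ↔ h0 < b))
    (hv : ∀ lv ∈ v.getLast?, (a < lv ↔ b < lv))
    (hgs : ∀ t, t ∈ w → a ≤ t → b ≤ t)
    (hfs : ∀ t, t ∈ v → t ≤ a → t ≤ b) :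
    IsQRWord (v ++ b :: w) ∧ heights (v ++ b :: w) = heights (v ++ a :: w) := by
  obtain ⟨fs, p, q, gs, hA, hB⟩ := decFactors_replace hab hw v hv
  have hflA : (List.flatten fs ++ p) ++ a :: (q ++ List.flatten gs) = v ++ a :: w := by
    have := decFactors_flatten (v ++ a :: w)
    rw [hA] at this
    simpa [List.flatten_append, List.flatten_cons, List.append_assoc] using this
  have hflB : (List.flatten fs ++ p) ++ b :: (q ++ List.flatten gs) = v ++ b :: w := by
    have := decFactors_flatten (v ++ b :: w)
    rw [hB] at this
    simpa [List.flatten_append, List.flatten_cons, List.append_assoc] using this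
  obtain ⟨hLv, hMw⟩ := marked_inj hab hflA hflB
  constructor
  · rw [IsQRWord, hB, List.Chain', List.isChain_append, List.isChain_cons]
    rw [IsQRWord, hA, List.Chain', List.isChain_append, List.isChain_cons] at hQR
    obtain ⟨h1, ⟨h2a, h2b⟩, h3⟩ := hQR
    refine ⟨h1, ⟨?_, h2b⟩, ?_⟩
    · intro yy hyy
      have hRa := h2a yy hyy
      rcases p with _ | ⟨p0, p'⟩
      · simp only [List.nil_append, List.headD_cons] at hRa ⊢
        have hyymem : yy ∈ gs := List.mem_of_mem_head? hyy
        have hyyne : yy ≠ [] := by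
          apply decFactors_ne_nil (u := v ++ a :: w)
          rw [hA]
          exact List.mem_append_right _ (List.mem_cons_of_mem _ hyymem)
        have : yy.getLastD 0 ∈ w := by
          rw [← hMw]
          exact List.mem_append_right _ (List.mem_flatten.2 ⟨yy, hyymem, getLastD_mem hyyne⟩)
        exact hgs _ this hRa
      · simpa using hRa
    · intro z hz yy hyy
      simp only [List.head?_cons, Option.mem_def, Option.some.injEq] at hyy
      subst hyy
      have hRa := h3 z hz (p ++ a :: q) rfl
      rcases q with _ | ⟨q0, q'⟩
      · rw [getLastD_append_cons] at hRa ⊢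
        simp only [List.getLastD] at hRa ⊢
        have hzmem : z ∈ fs := List.mem_of_mem_getLast? hz
        have hzne : z ≠ [] := by
          apply decFactors_ne_nil (u := v ++ a :: w)
          rw [hA]
          exact List.mem_append_left _ hzmem
        have : z.headD 0 ∈ v := by
          rw [← hLv]
          exact List.mem_append_left _ (List.mem_flatten.2 ⟨z, hzmem, headD_mem hzne⟩)
        exact hfs _ this hRa
      · rw [getLastD_append_cons] at hRa ⊢
        rw [getLastD_cons'] at hRa ⊢
        exact hRa
  · rw [heights, heights, hA, hB]
    simp

lemma qf_step {i : ℕ} {x y : List ℕ} (hQR : IsQRWord x) (h : qf i x = some y) :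
    IsQRWord y ∧ heights y = heights x := by
  obtain ⟨hni, v, w, rfl, hw, rfl⟩ := qf_eq_some.1 h
  apply replace_step (by omega) hQR
  · intro h0 hh0
    have : h0 ∈ w := List.mem_of_mem_head? hh0
    have : h0 ≠ i := fun hh => hw (hh ▸ this)
    omega
  · intro lv hlv
    have hmem : lv ∈ v := List.mem_of_mem_getLast? hlv
    have : lv ≠ i + 1 := by
      intro hh
      subst hh
      obtain ⟨v1, v2, rfl⟩ := List.append_of_mem hmem
      exact hni ⟨v1, v2, w, by simp⟩
    omega
  · intro t ht hat
    have : t ≠ i := fun hh => hw (hh ▸ ht)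
    omega
  · intro t _ hta
    omega

lemma qe_step {i : ℕ} {x y : List ℕ} (hQR : IsQRWord x) (h : qe i x = some y) :
    IsQRWord y ∧ heights y = heights x := by
  obtain ⟨hni, v, w, rfl, hv, rfl⟩ := qe_eq_some.1 h
  apply replace_step (by omega) hQR
  · intro h0 hh0
    have hmem : h0 ∈ w := List.mem_of_mem_head? hh0
    have : h0 ≠ i := by
      intro hh
      subst hh
      obtain ⟨w1, w2, rfl⟩ := List.append_of_mem hmem
      exact hni ⟨v, w1, w2, by simp⟩
    omega
  · intro lv hlv
    have hmem : lv ∈ v := List.mem_of_mem_getLast? hlv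
    have : lv ≠ i + 1 := fun hh => hv (hh ▸ hmem)
    omega
  · intro t _ hat
    omega
  · intro t ht hta
    have : t ≠ i + 1 := fun hh => hv (hh ▸ ht)
    omega


lemma isWord_qf {n i : ℕ} {x y : List ℕ} (hW : IsWord n x) (hi : i < n)
    (h : qf i x = some y) : IsWord n y := by
  obtain ⟨-, v, w, rfl, -, rfl⟩ := qf_eq_some.1 h
  intro t ht
  rcases List.mem_append.1 ht with ht | ht
  · exact hW t (List.mem_append_left _ ht)
  · rcases List.mem_cons.1 ht with rfl | ht
    · omega
    · exact hW t (List.mem_append_right _ (List.mem_cons_of_mem _ ht))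

lemma isWord_qe {n i : ℕ} {x y : List ℕ} (hW : IsWord n x) (hi1 : 1 ≤ i) (hi : i < n)
    (h : qe i x = some y) : IsWord n y := by
  obtain ⟨-, v, w, rfl, -, rfl⟩ := qe_eq_some.1 h
  intro t ht
  rcases List.mem_append.1 ht with ht | ht
  · exact hW t (List.mem_append_left _ ht)
  · rcases List.mem_cons.1 ht with rfl | ht
    · omega
    · exact hW t (List.mem_append_right _ (List.mem_cons_of_mem _ ht))

lemma comp_inv {n : ℕ} {v z : List ℕ} (hQR : IsQRWord v) (hW : IsWord n v)
    (h : SameComp n v z) : IsQRWord z ∧ IsWord n z ∧ heights z = heights v := by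
  induction h with
  | refl => exact ⟨hQR, hW, rfl⟩
  | tail _ hadj ih =>
    obtain ⟨hQRb, hWb, hhb⟩ := ih
    obtain ⟨i, he | he⟩ := hadj
    · obtain ⟨h1, h2, hf⟩ := he
      obtain ⟨hq, hh⟩ := qf_step hQRb hf
      exact ⟨hq, isWord_qf hWb h2 hf, hh.trans hhb⟩
    · obtain ⟨h1, h2, hf⟩ := he
      have hqe := qe_qf hf
      obtain ⟨hq, hh⟩ := qe_step hQRb hqe
      exact ⟨hq, isWord_qe hWb h1 h2 hqe, hh.trans hhb⟩

lemma to_hw {n : ℕ} (x : List ℕ) (hQR : IsQRWord x) (hW : IsWord n x) :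
    ∃ h, SameComp n x h ∧ IsQRWord h ∧ IsWord n h ∧ heights h = heights x ∧
      HighestWeight n h := by
  generalize hk : x.sum = k
  induction k using Nat.strong_induction_on generalizing x with
  | _ k ih =>
    by_cases hhw : HighestWeight n x
    · exact ⟨x, Relation.ReflTransGen.refl, hQR, hW, rfl, hhw⟩
    · simp only [HighestWeight, not_forall] at hhw
      obtain ⟨i, h1, h2, hne⟩ := hhw
      rcases hy : qe i x with _ | y
      · exact absurd hy hne
      obtain ⟨hQRy, hhy⟩ := qe_step hQR hy
      have hWy : IsWord n y := isWord_qe hW h1 h2 hy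
      have hsum : y.sum < k := by
        obtain ⟨-, v, w, hx, -, hy'⟩ := qe_eq_some.1 hy
        subst hy'
        rw [← hk, hx]
        simp [List.sum_append]
      have hstep : SameComp n x y :=
        Relation.ReflTransGen.single ⟨i, Or.inr ⟨h1, h2, qf_qe hy⟩⟩
      obtain ⟨h, hc, hq, hw2, hh, hhw2⟩ := ih y.sum hsum y hQRy hWy rfl
      exact ⟨h, hstep.trans hc, hq, hw2, hh.trans hhy, hhw2⟩


lemma chain'_iff_getElem' {R : ℕ → ℕ → Prop} {l : List ℕ} :
    l.Chain' R ↔ ∀ (i : ℕ) (_ : i + 1 < l.length), R l[i] l[i+1] := by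
  rw [List.Chain', List.isChain_iff_getElem]

lemma chain'_cols_iff_getElem {R : List ℕ → List ℕ → Prop} {l : List (List ℕ)} :
    l.Chain' R ↔ ∀ (i : ℕ) (_ : i + 1 < l.length), R l[i] l[i+1] := by
  rw [List.Chain', List.isChain_iff_getElem]

lemma desc_pairwise {c : List ℕ} (h : c.Chain' (fun p q => q < p)) :
    c.Pairwise (fun p q => q < p) := by
  haveI : IsTrans ℕ (fun p q => q < p) := ⟨fun _ _ _ h1 h2 => lt_trans h2 h1⟩
  exact List.isChain_iff_pairwise.1 h

lemma mem_le_headD {c : List ℕ} (h : c.Chain' (fun p q => q < p)) {x : ℕ} (hx : x ∈ c) :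
    x ≤ c.headD 0 := by
  rcases c with _ | ⟨a, c'⟩
  · simp at hx
  · rcases List.mem_cons.1 hx with rfl | hx
    · simp
    · have := (List.pairwise_cons.1 (desc_pairwise h)).1 x hx
      simp only [List.headD_cons]
      omega

lemma getLastD_le_mem {c : List ℕ} (h : c.Chain' (fun p q => q < p)) {x : ℕ} (hx : x ∈ c) :
    c.getLastD 0 ≤ x := by
  induction c with
  | nil => simp at hx
  | cons a c' ih =>
    rw [getLastD_cons']
    rcases c' with _ | ⟨b, c''⟩
    · simp only [List.mem_singleton] at hx
      simp [hx, List.getLastD]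
    · have hch : (b :: c'').Chain' (fun p q => q < p) := h.tail
      rw [getLastD_irrel (by simp)]
      rcases List.mem_cons.1 hx with rfl | hx
      · have hmem : (b :: c'').getLastD 0 ∈ b :: c'' := getLastD_mem (by simp)
        have := (List.pairwise_cons.1 (desc_pairwise h)).1 _ hmem
        omega
      · exact ih hch hx

/-- Pairwise version of the quasi-ribbon condition between columns. -/
lemma qr_pairwise : ∀ {cs : List (List ℕ)},
    (∀ c ∈ cs, c ≠ [] ∧ c.Chain' (fun p q => q < p)) →
    cs.Chain' (fun c d => c.headD 0 ≤ d.getLastD 0) →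
    cs.Pairwise (fun c d => c.headD 0 ≤ d.getLastD 0) := by
  intro cs
  induction cs with
  | nil => intro _ _; simp
  | cons c cs ih =>
    intro hcols hch
    have hch' := (List.isChain_cons.1 hch).2
    have hpw := ih (fun d hd => hcols d (List.mem_cons_of_mem _ hd)) hch'
    rw [List.pairwise_cons]
    refine ⟨?_, hpw⟩
    rcases cs with _ | ⟨e, cs'⟩
    · simp
    · intro d hd
      have hce : c.headD 0 ≤ e.getLastD 0 := (List.isChain_cons.1 hch).1 e rfl
      rcases List.mem_cons.1 hd with rfl | hd
      · exact hce
      · have hed : e.headD 0 ≤ d.getLastD 0 := (List.pairwise_cons.1 hpw).1 d hd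
        have he := hcols e (by simp)
        have : e.getLastD 0 ≤ e.headD 0 :=
          mem_le_headD he.2 (getLastD_mem he.1)
        omega

lemma cross_cols {cs : List (List ℕ)}
    (hcols : ∀ c ∈ cs, c ≠ [] ∧ c.Chain' (fun p q => q < p))
    (hch : cs.Chain' (fun c d => c.headD 0 ≤ d.getLastD 0))
    {j1 j2 : ℕ} (h1 : j1 < cs.length) (h2 : j2 < cs.length) (hlt : j1 < j2)
    {y1 y2 : ℕ} (hy1 : y1 ∈ cs[j1]) (hy2 : y2 ∈ cs[j2]) : y1 ≤ y2 := by
  have hpw := qr_pairwise hcols hch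
  have hrel := List.pairwise_iff_getElem.1 hpw j1 j2 h1 h2 hlt
  have ha : y1 ≤ (cs[j1]).headD 0 :=
    mem_le_headD (hcols _ (List.getElem_mem h1)).2 hy1
  have hb : (cs[j2]).getLastD 0 ≤ y2 :=
    getLastD_le_mem (hcols _ (List.getElem_mem h2)).2 hy2
  omega

lemma flatten_ge_head {c : List ℕ} {cs : List (List ℕ)}
    (hcols : ∀ d ∈ c :: cs, d ≠ [] ∧ d.Chain' (fun p q => q < p))
    (hch : (c :: cs).Chain' (fun c d => c.headD 0 ≤ d.getLastD 0))
    {y : ℕ} (hy : y ∈ cs.flatten) : c.headD 0 ≤ y := by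
  obtain ⟨d, hd, hyd⟩ := List.mem_flatten.1 hy
  have hpw := qr_pairwise hcols hch
  have hrel := (List.pairwise_cons.1 hpw).1 d hd
  have : d.getLastD 0 ≤ y := getLastD_le_mem (hcols d (List.mem_cons_of_mem _ hd)).2 hyd
  omega

lemma same_col : ∀ (cs : List (List ℕ)),
    (∀ c ∈ cs, c ≠ [] ∧ c.Chain' (fun p q => q < p)) →
    cs.Chain' (fun c d => c.headD 0 ≤ d.getLastD 0) →
    ∀ {s t : List ℕ} {α β : ℕ}, cs.flatten = s ++ t → α ∈ s → β ∈ t → β < α →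
    ∃ c ∈ cs, α ∈ c ∧ β ∈ c := by
  intro cs
  induction cs with
  | nil =>
    intro _ _ s t α β hft hα hβ hlt
    have : α ∈ s ++ t := List.mem_append_left _ hα
    rw [← hft] at this
    simp at this
  | cons c cs ih =>
    intro hcols hch s t α β hft hα hβ hlt
    simp only [List.flatten_cons] at hft
    rcases List.append_eq_append_iff.1 hft with ⟨m, hm1, hm2⟩ | ⟨m, hm1, hm2⟩
    · -- s = c ++ m, cs.flatten = m ++ t
      rcases List.mem_append.1 (hm1 ▸ hα) with hαc | hαm
      · -- α ∈ c, β ∈ t ⊆ cs.flatten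
        have hβf : β ∈ cs.flatten := by rw [hm2]; exact List.mem_append_right _ hβ
        have := flatten_ge_head hcols hch hβf
        have : α ≤ c.headD 0 := mem_le_headD (hcols c (by simp)).2 hαc
        omega
      · obtain ⟨d, hd, h1, h2⟩ := ih (fun d hd => hcols d (List.mem_cons_of_mem _ hd))
          ((List.isChain_cons.1 hch).2) hm2 hαm hβ hlt
        exact ⟨d, List.mem_cons_of_mem _ hd, h1, h2⟩
    · -- c = s ++ m, t = m ++ cs.flatten
      rcases List.mem_append.1 (hm2 ▸ hβ) with hβm | hβf
      · have hβc : β ∈ c := by rw [hm1]; exact List.mem_append_right _ hβm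
        have hαc : α ∈ c := by rw [hm1]; exact List.mem_append_left _ hα
        exact ⟨c, by simp, hαc, hβc⟩
      · have hαc : α ∈ c := by rw [hm1]; exact List.mem_append_left _ hα
        have := flatten_ge_head hcols hch hβf
        have : α ≤ c.headD 0 := mem_le_headD (hcols c (by simp)).2 hαc
        omega

lemma hasInv_mem_left {i : ℕ} {u : List ℕ} (h : HasInv i u) : (i + 1) ∈ u := by
  obtain ⟨v, w, x, rfl⟩ := h
  simp

lemma hasInv_mem_right {i : ℕ} {u : List ℕ} (h : HasInv i u) : i ∈ u := by
  obtain ⟨v, w, x, rfl⟩ := h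
  simp

/-- Interval-column structure of highest-weight quasi-ribbon words. -/
def IC : ℕ → List (List ℕ) → Prop
  | _, [] => True
  | t, c :: cs => c ≠ [] ∧ c.getLastD 0 = t ∧ c.Chain' (fun p q => p = q + 1) ∧
      IC (c.headD 0) cs

lemma build_ic : ∀ (cs : List (List ℕ)) (t : ℕ),
    (∀ c ∈ cs, c ≠ [] ∧ c.Chain' (fun p q => p = q + 1)) →
    cs.Chain' (fun c d => d.getLastD 0 = c.headD 0) →
    (∀ c0 ∈ cs.head?, c0.getLastD 0 = t) → IC t cs := by
  intro cs
  induction cs with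
  | nil => intro t _ _ _; trivial
  | cons c cs ih =>
    intro t hcols hch hhd
    refine ⟨(hcols c (by simp)).1, hhd c rfl, (hcols c (by simp)).2, ?_⟩
    apply ih
    · exact fun d hd => hcols d (List.mem_cons_of_mem _ hd)
    · exact (List.isChain_cons.1 hch).2
    · intro c0 hc0
      exact (List.isChain_cons.1 hch).1 c0 hc0

lemma hw_ic_core {x : List ℕ} (cs : List (List ℕ)) (hfl : cs.flatten = x)
    (hcols : ∀ c ∈ cs, c ≠ [] ∧ c.Chain' (fun p q => q < p))
    (hch : cs.Chain' (fun c d => c.headD 0 ≤ d.getLastD 0))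
    (h1x : ∀ y ∈ x, 1 ≤ y)
    (hinv : ∀ m, 2 ≤ m → m ∈ x → HasInv (m - 1) x) : IC 1 cs := by
  have hmemx : ∀ {j : ℕ} (hj : j < cs.length) {y : ℕ}, y ∈ cs[j] → y ∈ x := by
    intro j hj y hy
    rw [← hfl]
    exact List.mem_flatten.2 ⟨cs[j], List.getElem_mem hj, hy⟩
  -- (a) each column is consecutive
  have hcons : ∀ c ∈ cs, c.Chain' (fun p q => p = q + 1) := by
    intro c hc
    obtain ⟨j, hj, rfl⟩ := List.getElem_of_mem hc
    rw [chain'_iff_getElem']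
    intro i hi
    have hdesc := (hcols _ (List.getElem_mem hj)).2
    have hqp : (cs[j])[i+1] < (cs[j])[i] := chain'_iff_getElem'.1 hdesc i hi
    by_contra hne
    have hip : (cs[j])[i] ∈ x := hmemx hj (List.getElem_mem (by omega))
    have hiq : (cs[j])[i+1] ∈ x := hmemx hj (List.getElem_mem hi)
    have h1q : 1 ≤ (cs[j])[i+1] := h1x _ hiq
    have h2p : 2 ≤ (cs[j])[i] := by omega
    have hg : (cs[j])[i] - 1 ∈ x := hasInv_mem_right (hinv _ h2p hip)
    rw [← hfl] at hg
    obtain ⟨e, he, hge⟩ := List.mem_flatten.1 hg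
    obtain ⟨j', hj', rfl⟩ := List.getElem_of_mem he
    rcases lt_trichotomy j' j with hlt | rfl | hlt
    · have := cross_cols hcols hch hj' hj hlt hge (List.getElem_mem hi)
      omega
    · obtain ⟨m, hm, hme⟩ := List.getElem_of_mem hge
      have hpwc := desc_pairwise hdesc
      rcases lt_trichotomy m i with h' | rfl | h'
      · have := List.pairwise_iff_getElem.1 hpwc m i hm (by omega) h'
        omega
      · omega
      · rcases Nat.lt_or_ge m (i + 1) with h'' | h''
        · omega
        · rcases Nat.eq_or_lt_of_le h'' with rfl | h''
          · omega
          · have := List.pairwise_iff_getElem.1 hpwc (i + 1) m hi hm h''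
            omega
    · have := cross_cols hcols hch hj hj' hlt
        (List.getElem_mem (l := cs[j]) (n := i) (by omega)) hge
      omega
  -- (b) first column ends at 1
  have hb : ∀ c0 ∈ cs.head?, c0.getLastD 0 = 1 := by
    rcases cs with _ | ⟨c, cs'⟩
    · simp
    · intro c0 hc0
      simp only [List.head?_cons, Option.mem_def, Option.some.injEq] at hc0
      subst hc0
      have hc0ne := (hcols c (by simp)).1
      have hmem : c.getLastD 0 ∈ c := getLastD_mem hc0ne
      have hmx : c.getLastD 0 ∈ x := by
        rw [← hfl]
        exact List.mem_flatten.2 ⟨c, by simp, hmem⟩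
      have h1m : 1 ≤ c.getLastD 0 := h1x _ hmx
      by_contra hne
      have h2m : 2 ≤ c.getLastD 0 := by omega
      have hg : c.getLastD 0 - 1 ∈ x := hasInv_mem_right (hinv _ h2m hmx)
      rw [← hfl] at hg
      obtain ⟨e, he, hge⟩ := List.mem_flatten.1 hg
      obtain ⟨j', hj', rfl⟩ := List.getElem_of_mem he
      rcases Nat.eq_zero_or_pos j' with rfl | hpos
      · simp only [List.getElem_cons_zero] at hge
        have := getLastD_le_mem (hcols c (by simp)).2 hge
        omega
      · have h0 : (0 : ℕ) < (c :: cs').length := by simp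
        have hm0 : c.getLastD 0 ∈ (c :: cs')[0] := by simpa using hmem
        have := cross_cols hcols hch h0 hj' hpos hm0 hge
        omega
  -- (c) consecutive columns share endpoint values
  have hcc : cs.Chain' (fun c d => d.getLastD 0 = c.headD 0) := by
    rw [chain'_cols_iff_getElem]
    intro j hj
    have hj1 : j < cs.length := by omega
    have hHmem : (cs[j]).headD 0 ∈ cs[j] := headD_mem (hcols _ (List.getElem_mem hj1)).1
    have hmmem : (cs[j+1]).getLastD 0 ∈ cs[j+1] :=
      getLastD_mem (hcols _ (List.getElem_mem hj)).1
    have hle : (cs[j]).headD 0 ≤ (cs[j+1]).getLastD 0 := chain'_cols_iff_getElem.1 hch j hj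
    by_contra hne
    have hlt : (cs[j]).headD 0 < (cs[j+1]).getLastD 0 := by omega
    have hmx : (cs[j+1]).getLastD 0 ∈ x := hmemx hj hmmem
    have hHx : (cs[j]).headD 0 ∈ x := hmemx hj1 hHmem
    have h1H : 1 ≤ (cs[j]).headD 0 := h1x _ hHx
    have h2m : 2 ≤ (cs[j+1]).getLastD 0 := by omega
    obtain ⟨s, t, hft, hs, ht⟩ := hasInv_iff_split.1 (hinv _ h2m hmx)
    have hm1 : (cs[j+1]).getLastD 0 - 1 + 1 = (cs[j+1]).getLastD 0 := by omega
    rw [hm1] at hs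
    obtain ⟨e, he, hα, hβ⟩ := same_col cs hcols hch (hfl ▸ hft) hs ht (by omega)
    obtain ⟨j', hj', rfl⟩ := List.getElem_of_mem he
    rcases lt_trichotomy j' j with h' | rfl | h'
    · have := cross_cols hcols hch hj' hj1 h' hα hHmem
      omega
    · have := mem_le_headD (hcols _ (List.getElem_mem hj1)).2 hα
      omega
    · rcases Nat.eq_or_lt_of_le h' with h'' | h''
      · have heq : cs[j'] = cs[j+1] := by
          congr 1
          omega
        rw [heq] at hβ
        have := getLastD_le_mem (hcols _ (List.getElem_mem hj)).2 hβ
        omega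
      · have := cross_cols hcols hch hj hj' h'' hmmem hβ
        omega
  exact build_ic cs 1 (fun c hcm => ⟨(hcols c hcm).1, hcons c hcm⟩) hcc hb

lemma hw_ic {n : ℕ} {x : List ℕ} (hQR : IsQRWord x) (hW : IsWord n x)
    (hhw : HighestWeight n x) : IC 1 (decFactors x) := by
  apply hw_ic_core (decFactors x) (decFactors_flatten x)
    (fun c hc => ⟨decFactors_ne_nil c hc, decFactors_sorted c hc⟩) hQR
    (fun y hy => (hW y hy).1)
  intro m h2 hm
  have hmn : m ≤ n := (hW m hm).2
  have := hhw (m - 1) (by omega) (by omega)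
  rcases qe_eq_none.1 this with h | h
  · exact h
  · have hm1 : m - 1 + 1 = m := by omega
    rw [hm1] at h
    exact absurd hm h


lemma consec_desc {c : List ℕ} (h : c.Chain' (fun p q => p = q + 1)) :
    c.Chain' (fun p q => q < p) := h.imp (fun {a b} hh => by omega)

lemma ic_elems_ge : ∀ {cs : List (List ℕ)} {t : ℕ}, IC t cs → ∀ y ∈ cs.flatten, t ≤ y := by
  intro cs
  induction cs with
  | nil => intro t _ y hy; simp at hy
  | cons c cs ih =>
    intro t hic y hy
    obtain ⟨hne, hlast, hcons, hrest⟩ := hic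
    rw [List.flatten_cons] at hy
    rcases List.mem_append.1 hy with hyc | hyf
    · have := getLastD_le_mem (consec_desc hcons) hyc
      omega
    · have h1 : c.headD 0 ≤ y := ih hrest y hyf
      have h2 : c.getLastD 0 ≤ c.headD 0 :=
        mem_le_headD (consec_desc hcons) (getLastD_mem hne)
      omega

lemma ic_head_mem {t : ℕ} {c : List ℕ} {cs : List (List ℕ)} (h : IC t (c :: cs)) : t ∈ c := by
  obtain ⟨hne, hlast, -, -⟩ := h
  exact hlast ▸ getLastD_mem hne

lemma getLastD_singleton (a d : ℕ) : ([a] : List ℕ).getLastD d = a := rfl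

lemma ic_unique : ∀ (k : ℕ) {t : ℕ} {cs cs' : List (List ℕ)},
    cs.flatten.length = k → IC t cs → IC t cs' → cs.flatten.Perm cs'.flatten → cs = cs' := by
  intro k
  induction k using Nat.strong_induction_on with
  | _ k ih =>
    intro t cs cs' hk hic hic' hperm
    rcases cs with _ | ⟨c, cs1⟩
    · rcases cs' with _ | ⟨c', cs2⟩
      · rfl
      · exfalso
        have hlen := hperm.length_eq
        have hne := (hic' : IC t (c' :: cs2)).1
        have : 1 ≤ c'.length := List.length_pos_iff.2 hne
        simp only [List.flatten_nil, List.length_nil, List.flatten_cons,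
          List.length_append] at hlen
        omega
    · rcases cs' with _ | ⟨c', cs2⟩
      · exfalso
        have hlen := hperm.length_eq
        have hne := (hic : IC t (c :: cs1)).1
        have : 1 ≤ c.length := List.length_pos_iff.2 hne
        simp only [List.flatten_nil, List.length_nil, List.flatten_cons,
          List.length_append] at hlen
        omega
      · obtain ⟨hne, hlast, hcons, hrest⟩ := hic
        obtain ⟨hne', hlast', hcons', hrest'⟩ := hic'
        rcases List.eq_nil_or_concat c with rfl | ⟨L, b, hc⟩
        · exact absurd rfl hne
        rcases List.eq_nil_or_concat c' with rfl | ⟨L', b', hc'⟩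
        · exact absurd rfl hne'
        rw [List.concat_eq_append] at hc hc'
        subst hc hc'
        have hb : t = b := by
          rw [getLastD_append_cons, getLastD_singleton] at hlast
          omega
        subst hb
        have hb' : t = b' := by
          rw [getLastD_append_cons, getLastD_singleton] at hlast'
          omega
        subst hb'
        -- helper facts
        have elems_ge : ∀ (M : List ℕ), (M ++ [t]).Chain' (fun p q => p = q + 1) →
            ∀ z ∈ M, t + 1 ≤ z := by
          intro M hch z hz
          have hbound := (List.isChain_append.1 hch).2.2
          rcases List.eq_nil_or_concat M with rfl | ⟨M0, m0, hM⟩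
          · simp at hz
          · rw [List.concat_eq_append] at hM
            subst hM
            have hlastM : m0 = t + 1 := by
              have := hbound m0 (by rw [List.getLast?_append_cons]; simp) t rfl
              omega
            have hdesc := consec_desc ((List.isChain_append.1 hch).1)
            have hle : (M0 ++ [m0]).getLastD 0 ≤ z := getLastD_le_mem hdesc hz
            rw [getLastD_append_cons, getLastD_singleton] at hle
            omega
        have lastL_eq : ∀ (a : ℕ) (L0 : List ℕ),
            ((a :: L0) ++ [t]).Chain' (fun p q => p = q + 1) →
            (a :: L0).getLastD 0 = t + 1 := by
          intro a L0 hch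
          have hbound := (List.isChain_append.1 hch).2.2
          rcases List.eq_nil_or_concat (a :: L0) with habs | ⟨M0, m0, hM⟩
          · simp at habs
          · rw [List.concat_eq_append] at hM
            rw [hM]
            have := hbound m0 (by rw [hM, List.getLast?_append_cons]; simp) t rfl
            rw [getLastD_append_cons, getLastD_singleton]
            omega
        -- mixed-case contradiction helper
        have mixed : ∀ (a' : ℕ) (L0' : List ℕ) (ds1 ds2 : List (List ℕ)),
            IC ([t].headD 0) ds1 → IC (((a' :: L0') ++ [t]).headD 0) ds2 →
            ((a' :: L0') ++ [t]).Chain' (fun p q => p = q + 1) →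
            ([t] :: ds1).flatten.Perm (((a' :: L0') ++ [t]) :: ds2).flatten → False := by
          intro a' L0' ds1 ds2 hr1 hr2 hch' hpm
          have hL' : List.count t (a' :: L0') = 0 :=
            List.count_eq_zero.2 (fun hmem => by
              have := elems_ge _ hch' t hmem; omega)
          have hB : List.count t ds2.flatten = 0 := by
            apply List.count_eq_zero.2
            intro hmem
            have hhead : ((a' :: L0') ++ [t]).headD 0 = a' := by simp
            rw [hhead] at hr2
            have h1 := ic_elems_ge hr2 t hmem
            have h2 := elems_ge _ hch' a' (by simp)
            omega
          have hA0 : List.count t ds1.flatten = 0 := by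
            have hcnt := List.perm_iff_count.1 hpm t
            simp only [List.flatten_cons, List.count_append] at hcnt
            rw [hL', hB] at hcnt
            simp only [List.count_singleton] at hcnt
            have hself : List.count t ((t :: []) : List ℕ) = 1 := by simp
            omega
          rcases ds1 with _ | ⟨d, ds⟩
          · have hlen := hpm.length_eq
            simp at hlen
          · have htd : t ∈ (d :: ds).flatten := by
              simp only [List.flatten_cons]
              exact List.mem_append_left _ (ic_head_mem (by simpa using hr1))
            have := List.count_pos_iff.2 htd
            omega
        rcases L with _ | ⟨a, L0⟩
        · rcases L' with _ | ⟨a', L0'⟩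
          · -- both singleton [t]
            simp only [List.nil_append] at *
            have hperm2 : cs1.flatten.Perm cs2.flatten := by
              simp only [List.flatten_cons, List.singleton_append] at hperm
              exact hperm.cons_inv
            have hlt : cs1.flatten.length < k := by
              rw [← hk]
              simp
            have heq := ih _ hlt rfl (show IC t cs1 by simpa using hrest)
              (show IC t cs2 by simpa using hrest') hperm2
            rw [heq]
          · exact absurd (mixed a' L0' cs1 cs2 (by simpa using hrest) hrest' hcons'
              (by simpa using hperm)) not_false
        · rcases L' with _ | ⟨a', L0'⟩
          · exact absurd (mixed a L0 cs2 cs1 (by simpa using hrest') hrest hcons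
              (by simpa using hperm.symm)) not_false
          · -- both columns have length ≥ 2 : peel the letter t
            have hic1 : IC (t + 1) ((a :: L0) :: cs1) := by
              refine ⟨by simp, lastL_eq a L0 hcons, (List.isChain_append.1 hcons).1, ?_⟩
              have heq : ((a :: L0) ++ [t]).headD 0 = (a :: L0).headD 0 := by simp
              exact heq ▸ hrest
            have hic2 : IC (t + 1) ((a' :: L0') :: cs2) := by
              refine ⟨by simp, lastL_eq a' L0' hcons', (List.isChain_append.1 hcons').1, ?_⟩
              have heq : ((a' :: L0') ++ [t]).headD 0 = (a' :: L0').headD 0 := by simp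
              exact heq ▸ hrest'
            have hperm2 : ((a :: L0) :: cs1).flatten.Perm ((a' :: L0') :: cs2).flatten := by
              apply List.perm_iff_count.2
              intro y
              have hcnt := List.perm_iff_count.1 hperm y
              simp only [List.flatten_cons, List.count_append, List.count_cons,
                List.count_nil, List.count_singleton'] at hcnt ⊢
              by_cases hyt : y = t
              · subst hyt
                simp at hcnt ⊢
                omega
              · simp [Ne.symm hyt, hyt] at hcnt ⊢
                omega
            have hlen2 : ((a :: L0) :: cs1).flatten.length < k := by
              rw [← hk]
              simp [List.flatten_cons, List.length_append]
            have heq := ih _ hlen2 rfl hic1 hic2 hperm2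
            injection heq with h1 h2
            rw [h1, h2]


lemma desc_nodup {c : List ℕ} (h : c.Chain' (fun p q => q < p)) : c.Nodup :=
  (desc_pairwise h).imp (fun {a b} hh => by omega)

lemma qr_cols_unique : ∀ (cs cs' : List (List ℕ)),
    (∀ c ∈ cs, c ≠ [] ∧ c.Chain' (fun p q => q < p)) →
    (∀ c ∈ cs', c ≠ [] ∧ c.Chain' (fun p q => q < p)) →
    cs.Chain' (fun c d => c.headD 0 ≤ d.getLastD 0) →
    cs'.Chain' (fun c d => c.headD 0 ≤ d.getLastD 0) →
    cs.map List.length = cs'.map List.length →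
    cs.flatten.Perm cs'.flatten → cs = cs' := by
  intro cs
  induction cs with
  | nil =>
    intro cs' _ _ _ _ hmap _
    simp only [List.map_nil] at hmap
    exact (List.map_eq_nil_iff.1 hmap.symm).symm
  | cons c cs1 ih =>
    intro cs' hcols hcols' hch hch' hmap hperm
    rcases cs' with _ | ⟨c', cs2⟩
    · simp at hmap
    · simp only [List.map_cons, List.cons.injEq] at hmap
      obtain ⟨hlen_cc', hmap'⟩ := hmap
      have hndc : c.Nodup := desc_nodup (hcols c (by simp)).2
      have hndc' : c'.Nodup := desc_nodup (hcols' c' (by simp)).2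
      -- first, c ~ c'
      have hkey : c.Perm c' := by
        have half : ∀ (d d' : List ℕ) (ds1 ds2 : List (List ℕ)),
            (∀ e ∈ d :: ds1, e ≠ [] ∧ e.Chain' (fun p q => q < p)) →
            (∀ e ∈ d' :: ds2, e ≠ [] ∧ e.Chain' (fun p q => q < p)) →
            (d :: ds1).Chain' (fun e f => e.headD 0 ≤ f.getLastD 0) →
            (d' :: ds2).Chain' (fun e f => e.headD 0 ≤ f.getLastD 0) →
            (d :: ds1).flatten.Perm ((d' :: ds2)).flatten →
            ∀ p : ℕ, List.count p d' < List.count p d →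
            d'.headD 0 ≤ p ∧ p ≤ d.headD 0 ∧ p ∈ d ∧ p ∉ d' := by
          intro d d' ds1 ds2 hco hco' hcc hcc' hpm p hp
          have hnd : d.Nodup := desc_nodup (hco d (by simp)).2
          have hc1 : List.count p d ≤ 1 := List.nodup_iff_count_le_one.1 hnd p
          have hcount1 : List.count p d = 1 := by omega
          have hcount0 : List.count p d' = 0 := by omega
          have hpmem : p ∈ d := List.count_pos_iff.1 (by omega)
          have hpnot : p ∉ d' := List.count_eq_zero.1 hcount0
          have hcnt := List.perm_iff_count.1 hpm p
          simp only [List.flatten_cons, List.count_append] at hcnt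
          have hpB : p ∈ ds2.flatten := List.count_pos_iff.1 (by omega)
          have h1 : d'.headD 0 ≤ p := flatten_ge_head hco' hcc' hpB
          have h2 : p ≤ d.headD 0 := mem_le_headD (hco d (by simp)).2 hpmem
          exact ⟨h1, h2, hpmem, hpnot⟩
        by_cases hall : ∀ p, List.count p c ≤ List.count p c'
        · have hsp : c.Subperm c' := List.subperm_ext_iff.2 (fun x _ => hall x)
          exact hsp.perm_of_length_le (by omega)
        · push_neg at hall
          obtain ⟨p, hp⟩ := hall
          obtain ⟨hp1, hp2, hp3, hp4⟩ := half c c' cs1 cs2 hcols hcols' hch hch' hperm p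
            (by omega)
          by_cases hall' : ∀ q, List.count q c' ≤ List.count q c
          · have hsp : c'.Subperm c := List.subperm_ext_iff.2 (fun x _ => hall' x)
            exact (hsp.perm_of_length_le (by omega)).symm
          · push_neg at hall'
            obtain ⟨q, hq⟩ := hall'
            obtain ⟨hq1, hq2, hq3, hq4⟩ := half c' c cs2 cs1 hcols' hcols hch' hch
              hperm.symm q (by omega)
            exfalso
            have hpq : p = q := by omega
            subst hpq
            exact hp4 hq3
      have hcc' : c = c' := by
        haveI : IsAntisymm ℕ (fun p q => q < p) :=
          ⟨fun a b h1 h2 => by omega⟩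
        exact List.Perm.eq_of_pairwise'
          (desc_pairwise (hcols c (by simp)).2) (desc_pairwise (hcols' c' (by simp)).2) hkey
      subst hcc'
      have hperm2 : cs1.flatten.Perm cs2.flatten := by
        have := hperm
        simp only [List.flatten_cons] at this
        exact (List.perm_append_left_iff c).1 this
      have heq := ih cs2 (fun e he => hcols e (List.mem_cons_of_mem _ he))
        (fun e he => hcols' e (List.mem_cons_of_mem _ he))
        ((List.isChain_cons.1 hch).2) ((List.isChain_cons.1 hch').2) hmap' hperm2
      rw [heq]

end Aux
/-- Each `∼`-class contains at most one quasi-ribbon word: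
if `u, v ∈ 𝒜_n^*` are quasi-ribbon words with `u ∼ v`, then `u = v`. -/
theorem atMostOne_quasiRibbon_word_per_sim_class (n : ℕ) (u v : List ℕ)
    (hu : IsWord n u) (hv : IsWord n v) (hqu : IsQRWord u) (hqv : IsQRWord v)
    (h : Sim n u v) : u = v := by
  obtain ⟨θ, ⟨hbij, hwt, hedge⟩, hθu⟩ := h
  obtain ⟨g, hcomp, hQRg, hWg, hhg, hHWg⟩ := to_hw u hqu hu
  have hg' : SameComp n v (θ g) := hbij.1 hcomp
  have hHW' : HighestWeight n (θ g) := by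
    intro i h1 h2
    rcases hz : qe i (θ g) with _ | z
    · rfl
    · exfalso
      have hedge_z : Edge n i z (θ g) := ⟨h1, h2, qf_qe hz⟩
      have hzmem : SameComp n v z := Relation.ReflTransGen.tail hg' ⟨i, Or.inr hedge_z⟩
      obtain ⟨z₀, hz₀mem, hz₀⟩ := hbij.2.2 hzmem
      have hE : Edge n i z₀ g := (hedge z₀ g hz₀mem hcomp i).2 (by rw [hz₀]; exact hedge_z)
      have hqe : qe i g = some z₀ := qe_qf hE.2.2
      rw [hHWg i h1 h2] at hqe
      cases hqe
  obtain ⟨hQR', hW', hh'⟩ := comp_inv hqv hv hg'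
  have hic1 : IC 1 (decFactors g) := hw_ic hQRg hWg hHWg
  have hic2 : IC 1 (decFactors (θ g)) := hw_ic hQR' hW' hHW'
  have hpermg : g.Perm (θ g) :=
    List.perm_iff_count.2 (fun a => (congrFun (hwt g hcomp) a).symm)
  have hdec : decFactors g = decFactors (θ g) :=
    ic_unique ((decFactors g).flatten.length) rfl hic1 hic2
      (by rw [decFactors_flatten, decFactors_flatten]; exact hpermg)
  have hgeq : g = θ g := by
    conv_lhs => rw [← decFactors_flatten g]
    rw [hdec, decFactors_flatten]
  have hheights : heights u = heights v := by
    rw [← hhg, hgeq, hh']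
  have hwtuv : u.Perm v := by
    apply List.perm_iff_count.2
    intro a
    have hcu := congrFun (hwt u Relation.ReflTransGen.refl) a
    rw [hθu] at hcu
    exact hcu.symm
  have hdecuv : decFactors u = decFactors v := by
    apply qr_cols_unique _ _ (fun c hc => ⟨decFactors_ne_nil c hc, decFactors_sorted c hc⟩)
      (fun c hc => ⟨decFactors_ne_nil c hc, decFactors_sorted c hc⟩) hqu hqv hheights
      (by rw [decFactors_flatten, decFactors_flatten]; exact hwtuv)
  rw [← decFactors_flatten u, ← decFactors_flatten v, hdecuv]

end HypoCrystal
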